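/- For even k, the k×k central difference matrix D_c (with 1/2 on the superdiagonal and -1/2 on the subdiagonal) is invertible. -/
import Mathlib

/-- Central difference matrix: 1/2 on the superdiagonal, -1/2 on the subdiagonal. -/
noncomputable def ctrDiff (k : ℕ) : Matrix (Fin k) (Fin k) ℝ :=
  Matrix.of fun i j =>
    if (j : ℕ) = (i : ℕ) + 1 then 1/2 else if (i : ℕ) = (j : ℕ) + 1 then -(1/2) else 0

theorem ctrDiff_invertible_even (k : ℕ) (hk : Even k) :
    ∃ E : Matrix (Fin k) (Fin k) ℝ, ctrDiff k * E = 1 ∧ E * ctrDiff k = 1 := by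
  have hdet : (ctrDiff k).det ≠ 0 := by
    intro hd
    obtain ⟨v, hv0, hv⟩ := (Matrix.exists_mulVec_eq_zero_iff).2 hd
    set w : ℕ → ℝ := fun n => if h : n < k then v ⟨n, h⟩ else 0 with hw
    -- key recurrence from each row
    have key : ∀ i : ℕ, i < k → w (i+1) = (if i = 0 then 0 else w (i-1)) := by
      intro i hi
      have hrow : (ctrDiff k).mulVec v ⟨i, hi⟩ = 0 := by rw [hv]; rfl
      have : ∑ j : Fin k, (ctrDiff k) ⟨i, hi⟩ j * v j = 0 := hrow
      rw [show (∑ j : Fin k, (ctrDiff k) ⟨i, hi⟩ j * v j)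
          = ∑ j ∈ Finset.range k, ((if j = i + 1 then (1/2) * w j else 0)
              + (if j + 1 = i then (-(1/2)) * w j else 0)) from ?_] at this
      · rw [Finset.sum_add_distrib, Finset.sum_ite_eq' (Finset.range k) (i+1)
            (fun j => (1/2) * w j)] at this
        rcases Nat.eq_zero_or_pos i with h0 | h0
        · subst h0
          have h2 : ∑ j ∈ Finset.range k, (if j + 1 = 0 then (-(1/2)) * w j else 0) = 0 :=
            Finset.sum_eq_zero (by intro j _; simp)
          rw [h2, add_zero] at this
          rw [if_pos rfl]
          by_cases h1 : 1 < k
          · rw [if_pos (Finset.mem_range.2 h1)] at this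
            linarith
          · rw [hw]; simp only []; rw [dif_neg (by omega)]
        · have h2 : ∑ j ∈ Finset.range k, (if j + 1 = i then (-(1/2)) * w j else 0)
              = (-(1/2)) * w (i-1) := by
            rw [Finset.sum_eq_single_of_mem (i-1) (Finset.mem_range.2 (by omega))]
            · rw [if_pos (by omega)]
            · intro j _ hj; rw [if_neg (by omega)]
          rw [h2] at this
          rw [if_neg (by omega)]
          by_cases h1 : i + 1 < k
          · rw [if_pos (Finset.mem_range.2 h1)] at this
            linarith
          · rw [if_neg (fun hh => h1 (Finset.mem_range.1 hh))] at this
            have hz : w (i+1) = 0 := by rw [hw]; simp [h1]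
            rw [hz]; linarith
      · rw [← Fin.sum_univ_eq_sum_range (fun j =>
            ((if j = i + 1 then (1/2) * w j else 0)
              + (if j + 1 = i then (-(1/2)) * w j else 0))) k]
        apply Finset.sum_congr rfl
        intro j _
        have hwj : w (j : ℕ) = v j := by rw [hw]; simp [j.isLt]
        simp only [ctrDiff, Matrix.of_apply]
        rw [← hwj]
        by_cases h1 : (j : ℕ) = i + 1
        · rw [if_pos h1, if_pos h1, if_neg (by omega), add_zero]
        · rw [if_neg h1, if_neg h1]
          by_cases h2 : i = (j : ℕ) + 1
          · rw [if_pos h2, if_pos (by omega), zero_add]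
          · rw [if_neg h2, if_neg (by omega), zero_mul, add_zero]
    -- all odd/even propagation
    have stepA : ∀ n m, m + 2 * n < k → w (m + 2 * n) = w m := by
      intro n
      induction n with
      | zero => intro m _; rfl
      | succ n ih =>
        intro m hm
        have h1 : m + 2 * n + 1 < k := by omega
        have := key (m + 2 * n + 1) h1
        rw [if_neg (by omega)] at this
        have e : m + 2 * (n+1) = (m + 2*n + 1) + 1 := by ring
        rw [e, this]
        simpa using ih m (by omega)
    have hk2 : k = 0 ∨ 2 ≤ k := by rcases hk with ⟨t, ht⟩; omega
    have hvz : v = 0 := by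
      funext j
      rcases hk2 with h | h
      · exact absurd j.isLt (by omega)
      have hw1 : w 1 = 0 := by have := key 0 (by omega); rw [if_pos rfl] at this; exact this
      have hwlast : w (k - 2) = 0 := by
        have := key (k-1) (by omega)
        rw [if_neg (by omega)] at this
        have hk' : k - 1 + 1 = k := by omega
        rw [hk'] at this
        have : w k = w (k - 1 - 1) := this
        rw [show k - 1 - 1 = k - 2 from by omega] at this
        have hz : w k = 0 := by rw [hw]; simp
        rw [← this, hz]
      have hwj : w (j : ℕ) = 0 := by
        rcases Nat.even_or_odd (j : ℕ) with he | ho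
        · -- even: w j = w (k-2) = 0
          obtain ⟨t2, ht2⟩ : ∃ t, k - 2 = (j : ℕ) + 2 * t := by
            rcases he with ⟨a, ha⟩; rcases hk with ⟨b, hb⟩
            have : (j:ℕ) ≤ k - 2 := by omega
            exact ⟨(k - 2 - j)/2, by omega⟩
          have := stepA t2 (j : ℕ) (by omega)
          rw [← ht2] at this
          rw [← this, hwlast]
        · obtain ⟨a, ha⟩ := ho
          have := stepA a 1 (by omega)
          rw [show (1 + 2 * a) = (j:ℕ) from by omega] at this
          rw [this, hw1]
      have : w (j : ℕ) = v j := by rw [hw]; simp [j.isLt]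
      rw [← this, hwj]; rfl
    exact hv0 hvz
  have hu : IsUnit (ctrDiff k).det := isUnit_iff_ne_zero.2 hdet
  exact ⟨(ctrDiff k)⁻¹, Matrix.mul_nonsing_inv _ hu, Matrix.nonsing_inv_mul _ hu⟩
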